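/- Let f and g be candidate densities and p a probability density, with A = {x : f(x) > g(x)}. If the empirical frequency μ̂(A) = (1/n)Σ_i 1(X_i ∈ A) and f is selected when |∫_A f − μ̂(A)| < |∫_A g − μ̂(A)| (else g is selected), then the selected density p̂ satisfies ‖p − p̂‖_1 ≤ 3·min(‖p−f‖_1, ‖p−g‖_1) + 4·max_{B∈{A, Aᶜ'}} |∫_B p − μ̂(B)|, where Aᶜ' = {x : f(x) < g(x)}. -/

import Mathlib

open MeasureTheory
open scoped Classical

lemma half_tv {α : Type*} [MeasurableSpace α] {μ : Measure α} {q : α → ℝ}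
    (hq : Integrable q μ) (hq0 : ∫ x, q x ∂μ = 0) {B : Set α} (hB : MeasurableSet B) :
    |∫ x in B, q x ∂μ| ≤ (∫ x, |q x| ∂μ) / 2 := by
  have habs : Integrable (fun x => |q x|) μ := hq.abs
  have hpos : Integrable (fun x => max (q x) 0) μ := hq.pos_part
  have hneg : Integrable (fun x => max (-q x) 0) μ := hq.neg.pos_part
  have hposint : ∫ x, max (q x) 0 ∂μ = (∫ x, |q x| ∂μ) / 2 := by
    have h1 : ∀ x, max (q x) 0 = (|q x| + q x) / 2 := by
      intro x
      rcases le_total 0 (q x) with h | h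
      · rw [abs_of_nonneg h, max_eq_left h]; ring
      · rw [abs_of_nonpos h, max_eq_right h]; ring
    calc ∫ x, max (q x) 0 ∂μ = ∫ x, (|q x| + q x) / 2 ∂μ := by simp_rw [h1]
    _ = ((∫ x, |q x| ∂μ) + ∫ x, q x ∂μ) / 2 := by
        rw [integral_div, integral_add habs hq]
    _ = (∫ x, |q x| ∂μ) / 2 := by rw [hq0, add_zero]
  have hnegint : ∫ x, max (-q x) 0 ∂μ = (∫ x, |q x| ∂μ) / 2 := by
    have h1 : ∀ x, max (-q x) 0 = (|q x| - q x) / 2 := by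
      intro x
      rcases le_total 0 (q x) with h | h
      · rw [abs_of_nonneg h, max_eq_right (by linarith)]; ring
      · rw [abs_of_nonpos h, max_eq_left (by linarith)]; ring
    calc ∫ x, max (-q x) 0 ∂μ = ∫ x, (|q x| - q x) / 2 ∂μ := by simp_rw [h1]
    _ = ((∫ x, |q x| ∂μ) - ∫ x, q x ∂μ) / 2 := by
        rw [integral_div, integral_sub habs hq]
    _ = (∫ x, |q x| ∂μ) / 2 := by rw [hq0, sub_zero]
  rw [abs_le]
  constructor
  · have h1 : ∫ x in B, -q x ∂μ ≤ ∫ x in B, max (-q x) 0 ∂μ :=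
      integral_mono hq.neg.restrict hneg.restrict (fun x => le_max_left _ _)
    have h2 : ∫ x in B, max (-q x) 0 ∂μ ≤ ∫ x, max (-q x) 0 ∂μ :=
      setIntegral_le_integral hneg (Filter.Eventually.of_forall (fun x => le_max_right _ _))
    rw [integral_neg] at h1
    linarith
  · have h1 : ∫ x in B, q x ∂μ ≤ ∫ x in B, max (q x) 0 ∂μ :=
      integral_mono hq.restrict hpos.restrict (fun x => le_max_left _ _)
    have h2 : ∫ x in B, max (q x) 0 ∂μ ≤ ∫ x, max (q x) 0 ∂μ :=
      setIntegral_le_integral hpos (Filter.Eventually.of_forall (fun x => le_max_right _ _))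
    linarith

lemma tv_eq {α : Type*} [MeasurableSpace α] {μ : Measure α} {q : α → ℝ}
    (hqm : Measurable q) (hq : Integrable q μ) (hq0 : ∫ x, q x ∂μ = 0) :
    ∫ x, |q x| ∂μ = 2 * ∫ x in {x | 0 < q x}, q x ∂μ := by
  set A : Set α := {x | 0 < q x} with hAdef
  have hA : MeasurableSet A := measurableSet_lt measurable_const hqm
  have habs : Integrable (fun x => |q x|) μ := hq.abs
  have hsplit : (∫ x in A, |q x| ∂μ) + (∫ x in Aᶜ, |q x| ∂μ) = ∫ x, |q x| ∂μ :=
    integral_add_compl hA habs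
  have hsplit2 : (∫ x in A, q x ∂μ) + (∫ x in Aᶜ, q x ∂μ) = ∫ x, q x ∂μ :=
    integral_add_compl hA hq
  have e1 : ∫ x in A, |q x| ∂μ = ∫ x in A, q x ∂μ :=
    setIntegral_congr_fun hA (fun x hx => abs_of_pos hx)
  have e2 : ∫ x in Aᶜ, |q x| ∂μ = ∫ x in Aᶜ, (-q x) ∂μ :=
    setIntegral_congr_fun hA.compl (fun x hx => abs_of_nonpos (not_lt.1 hx))
  rw [integral_neg] at e2
  rw [hq0] at hsplit2
  linarith

/-- Performance guarantee of the Scheffé estimator (Devroye–Lugosi, Theorem 6.1). -/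
theorem scheffe_estimator_guarantee (d n : ℕ) (hn : 0 < n)
    (f g p : (Fin d → ℝ) → ℝ) (X : Fin n → (Fin d → ℝ))
    (hfm : Measurable f) (hgm : Measurable g) (hpm : Measurable p)
    (hf0 : ∀ x, 0 ≤ f x) (hg0 : ∀ x, 0 ≤ g x) (hp0 : ∀ x, 0 ≤ p x)
    (hfi : Integrable f) (hgi : Integrable g) (hpi : Integrable p)
    (hf1 : ∫ x, f x = 1) (hg1 : ∫ x, g x = 1) (hp1 : ∫ x, p x = 1) :
    let A : Set (Fin d → ℝ) := {x | g x < f x}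
    let A' : Set (Fin d → ℝ) := {x | f x < g x}
    let emp : Set (Fin d → ℝ) → ℝ := fun B => (∑ i, if X i ∈ B then (1 : ℝ) else 0) / n
    let phat : (Fin d → ℝ) → ℝ :=
      if |(∫ x in A, f x) - emp A| < |(∫ x in A, g x) - emp A| then f else g
    ∫ x, |p x - phat x|
      ≤ 3 * min (∫ x, |p x - f x|) (∫ x, |p x - g x|)
        + 4 * max |(∫ x in A, p x) - emp A| |(∫ x in A', p x) - emp A'| := by
  intro A A' emp phat
  have hA : MeasurableSet A := measurableSet_lt hgm hfm
  -- basic quantities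
  set Δf := ∫ x, |p x - f x| with hΔf
  set Δg := ∫ x, |p x - g x| with hΔg
  set ε := |(∫ x in A, p x) - emp A| with hε
  set M := max |(∫ x in A, p x) - emp A| |(∫ x in A', p x) - emp A'| with hM
  have hεM : ε ≤ M := le_max_left _ _
  have hε0 : 0 ≤ ε := abs_nonneg _
  have hΔf0 : 0 ≤ Δf := integral_nonneg fun x => abs_nonneg _
  have hΔg0 : 0 ≤ Δg := integral_nonneg fun x => abs_nonneg _
  -- integrable differences
  have hifp : Integrable (fun x => f x - p x) := hfi.sub hpi
  have higp : Integrable (fun x => g x - p x) := hgi.sub hpi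
  have hifg : Integrable (fun x => f x - g x) := hfi.sub hgi
  have hifp0 : ∫ x, (f x - p x) = 0 := by
    rw [integral_sub hfi hpi, hf1, hp1, sub_self]
  have higp0 : ∫ x, (g x - p x) = 0 := by
    rw [integral_sub hgi hpi, hg1, hp1, sub_self]
  have hifg0 : ∫ x, (f x - g x) = 0 := by
    rw [integral_sub hfi hgi, hf1, hg1, sub_self]
  -- half total variation bounds on A
  have hfp : |(∫ x in A, f x) - (∫ x in A, p x)| ≤ Δf / 2 := by
    have h := half_tv hifp hifp0 hA
    rw [integral_sub hfi.restrict hpi.restrict] at h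
    have : ∫ x, |f x - p x| = Δf := by
      rw [hΔf]; congr 1; ext x; rw [abs_sub_comm]
    linarith [h, this ▸ h]
  have hgp : |(∫ x in A, g x) - (∫ x in A, p x)| ≤ Δg / 2 := by
    have h := half_tv higp higp0 hA
    rw [integral_sub hgi.restrict hpi.restrict] at h
    have heq : ∫ x, |g x - p x| = Δg := by
      rw [hΔg]; congr 1; ext x; rw [abs_sub_comm]
    rw [heq] at h
    exact h
  -- total variation identity
  have hAeq : A = {x | 0 < f x - g x} := by
    ext x; simp [A, sub_pos]
  have htv : ∫ x, |f x - g x| = 2 * ((∫ x in A, f x) - ∫ x in A, g x) := by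
    have h := tv_eq (q := fun x => f x - g x) (hfm.sub hgm) hifg hifg0
    rw [← hAeq, integral_sub hfi.restrict hgi.restrict] at h
    exact h
  -- triangle inequalities
  have htriF : Δf ≤ Δg + ∫ x, |f x - g x| := by
    have h1 : ∀ x, |p x - f x| ≤ |p x - g x| + |f x - g x| := by
      intro x
      calc |p x - f x| = |(p x - g x) + (g x - f x)| := by rw [show p x - f x = (p x - g x) + (g x - f x) by ring]
      _ ≤ |p x - g x| + |g x - f x| := abs_add_le _ _
      _ = |p x - g x| + |f x - g x| := by rw [abs_sub_comm (g x) (f x)]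
    calc Δf ≤ ∫ x, (|p x - g x| + |f x - g x|) :=
          integral_mono (hpi.sub hfi).abs ((hpi.sub hgi).abs.add (hfi.sub hgi).abs) h1
    _ = Δg + ∫ x, |f x - g x| := integral_add (hpi.sub hgi).abs (hfi.sub hgi).abs
  have htriG : Δg ≤ Δf + ∫ x, |f x - g x| := by
    have h1 : ∀ x, |p x - g x| ≤ |p x - f x| + |f x - g x| := by
      intro x
      calc |p x - g x| = |(p x - f x) + (f x - g x)| := by rw [show p x - g x = (p x - f x) + (f x - g x) by ring]
      _ ≤ |p x - f x| + |f x - g x| := abs_add_le _ _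
    calc Δg ≤ ∫ x, (|p x - f x| + |f x - g x|) :=
          integral_mono (hpi.sub hgi).abs ((hpi.sub hfi).abs.add (hfi.sub hgi).abs) h1
    _ = Δf + ∫ x, |f x - g x| := integral_add (hpi.sub hfi).abs (hfi.sub hgi).abs
  -- absolute value triangle facts around emp A
  have habsF : (∫ x in A, f x) - (∫ x in A, g x)
      ≤ |(∫ x in A, f x) - emp A| + |(∫ x in A, g x) - emp A| := by
    have := abs_sub_abs_le_abs_sub ((∫ x in A, f x) - emp A) ((∫ x in A, g x) - emp A)
    have h := abs_sub ((∫ x in A, f x) - emp A) ((∫ x in A, g x) - emp A)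
    calc (∫ x in A, f x) - (∫ x in A, g x)
        = ((∫ x in A, f x) - emp A) - ((∫ x in A, g x) - emp A) := by ring
    _ ≤ |((∫ x in A, f x) - emp A) - ((∫ x in A, g x) - emp A)| := le_abs_self _
    _ ≤ |(∫ x in A, f x) - emp A| + |(∫ x in A, g x) - emp A| := abs_sub _ _
  have hgpe : |(∫ x in A, g x) - emp A| ≤ Δg / 2 + ε := by
    calc |(∫ x in A, g x) - emp A|
        = |((∫ x in A, g x) - (∫ x in A, p x)) + ((∫ x in A, p x) - emp A)| := by rw [show (∫ x in A, g x) - emp A = ((∫ x in A, g x) - (∫ x in A, p x)) + ((∫ x in A, p x) - emp A) by ring]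
    _ ≤ |(∫ x in A, g x) - (∫ x in A, p x)| + |(∫ x in A, p x) - emp A| := abs_add_le _ _
    _ ≤ Δg / 2 + ε := add_le_add hgp (le_of_eq rfl)
  have hfpe : |(∫ x in A, f x) - emp A| ≤ Δf / 2 + ε := by
    calc |(∫ x in A, f x) - emp A|
        = |((∫ x in A, f x) - (∫ x in A, p x)) + ((∫ x in A, p x) - emp A)| := by rw [show (∫ x in A, f x) - emp A = ((∫ x in A, f x) - (∫ x in A, p x)) + ((∫ x in A, p x) - emp A) by ring]
    _ ≤ |(∫ x in A, f x) - (∫ x in A, p x)| + |(∫ x in A, p x) - emp A| := abs_add_le _ _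
    _ ≤ Δf / 2 + ε := add_le_add hfp (le_of_eq rfl)
  by_cases hsel : |(∫ x in A, f x) - emp A| < |(∫ x in A, g x) - emp A|
  · have hphat : phat = f := if_pos hsel
    rw [hphat]
    -- ‖f-g‖₁ ≤ 2Δg + 4ε
    have hbound : ∫ x, |f x - g x| ≤ 2 * Δg + 4 * ε := by
      rw [htv]
      have h1 : (∫ x in A, f x) - (∫ x in A, g x) ≤ 2 * |(∫ x in A, g x) - emp A| := by
        linarith [habsF, hsel.le]
      linarith [hgpe]
    have hkey : Δf ≤ 3 * Δg + 4 * M := by linarith [htriF, hεM]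
    have hkey2 : Δf ≤ 3 * Δf + 4 * M := by linarith [hεM]
    rcases min_cases Δf Δg with ⟨h, _⟩ | ⟨h, _⟩ <;> rw [h] <;> linarith
  · have hphat : phat = g := if_neg hsel
    rw [hphat]
    push_neg at hsel
    have hbound : ∫ x, |f x - g x| ≤ 2 * Δf + 4 * ε := by
      rw [htv]
      have h1 : (∫ x in A, f x) - (∫ x in A, g x) ≤ 2 * |(∫ x in A, f x) - emp A| := by
        linarith [habsF, hsel]
      linarith [hfpe]
    have hkey : Δg ≤ 3 * Δf + 4 * M := by linarith [htriG, hεM]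
    have hkey2 : Δg ≤ 3 * Δg + 4 * M := by linarith [hεM]
    rcases min_cases Δf Δg with ⟨h, _⟩ | ⟨h, _⟩ <;> rw [h] <;> linarith
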